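/- Let g : ℝ^m → ℝ^m be L-Lipschitz with ‖g(x)‖ ≤ G for all x ∈ ℝ^m, and let ĝ : ℝ^m → ℝ^m satisfy ‖ĝ(x) − g(x)‖ ≤ δ for all x ∈ ℝ^m. Let z : [a, b] → ℝ^m be differentiable with z'(t) = g(z(t)) for all t ∈ [a, b], fix 𝖳 ≥ 2, set Δt = (b−a)/(𝖳−1) and t_k = a + (k−1)Δt for k ∈ [𝖳], and define the inexact Euler iterates ẑ_1 = z(a), ẑ_{k+1} = ẑ_k + Δt·ĝ(ẑ_k). Then for every k ∈ [𝖳−1], ‖z(t_{k+1}) − ẑ_{k+1}‖ ≤ 3(b−a)e^{L(b−a)}·δ + (L·G/2)(b−a)e^{L(b−a)}·Δt. -/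

import Mathlib

noncomputable section

open Real Set

/-- `ℝ^m` with the Euclidean norm. -/
abbrev Euc (m : ℕ) : Type := EuclideanSpace ℝ (Fin m)

set_option maxHeartbeats 1000000 in
/-- Let `g : ℝ^m → ℝ^m` be `L`-Lipschitz with `‖g‖ ≤ G`, and let
`ĝ` satisfy `‖ĝ − g‖ ≤ δ` everywhere.  Let `z` solve `z' = g(z)` on `[a,b]`, let
`Δt = (b−a)/(nT−1)` and `t_k = a + (k−1)Δt`, and let `ẑ_1 = z(a)`,
`ẑ_{k+1} = ẑ_k + Δt·ĝ(ẑ_k)` be the inexact Euler iterates (0-indexed below, so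
`zh 0 = z a` and `t_{k+1} = a + (k+1)·Δt` for `k+1 ≤ nT−1`).  Then for every `k ∈ [nT−1]`,
`‖z(t_{k+1}) − ẑ_{k+1}‖ ≤ 3(b−a)e^{L(b−a)}·δ + (L·G/2)(b−a)e^{L(b−a)}·Δt`. -/
theorem euler_global_error
    (m nT : ℕ) (hnT : 2 ≤ nT) (a b : ℝ) (hab : a ≤ b)
    (L G δ : ℝ) (hL : 0 ≤ L)
    (g ghat : Euc m → Euc m)
    (hg : ∀ x y : Euc m, ‖g x - g y‖ ≤ L * ‖x - y‖)
    (hG : ∀ x : Euc m, ‖g x‖ ≤ G)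
    (hδ : ∀ x : Euc m, ‖ghat x - g x‖ ≤ δ)
    (z : ℝ → Euc m)
    (hz : ∀ t ∈ Icc a b, HasDerivAt z (g (z t)) t)
    (Δt : ℝ) (hΔt : Δt = (b - a) / ((nT : ℝ) - 1))
    (zh : ℕ → Euc m) (hzh0 : zh 0 = z a)
    (hzh : ∀ k : ℕ, zh (k + 1) = zh k + Δt • ghat (zh k)) :
    ∀ k : ℕ, k + 1 ≤ nT - 1 →
      ‖z (a + ((k : ℝ) + 1) * Δt) - zh (k + 1)‖ ≤
        3 * (b - a) * Real.exp (L * (b - a)) * δ +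
          L * G / 2 * (b - a) * Real.exp (L * (b - a)) * Δt := by
  set n : ℕ := nT - 1 with hn
  have hn1 : 1 ≤ n := by omega
  have hncast : ((nT : ℝ) - 1) = (n : ℝ) := by
    have : nT = n + 1 := by omega
    rw [this]; push_cast; ring
  have hnpos : (0:ℝ) < (n : ℝ) := by exact_mod_cast hn1
  have hΔtn : (n : ℝ) * Δt = b - a := by
    rw [hΔt, hncast]; field_simp
  have hΔt0 : 0 ≤ Δt := by
    rw [hΔt, hncast]; exact div_nonneg (by linarith) (le_of_lt hnpos)
  have hδ0 : 0 ≤ δ := le_trans (norm_nonneg _) (hδ 0)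
  have hG0 : 0 ≤ G := le_trans (norm_nonneg _) (hG 0)
  -- continuity facts
  have hgc : Continuous g := by
    have : LipschitzWith ⟨L, hL⟩ g :=
      LipschitzWith.of_dist_le_mul fun x y => by rw [dist_eq_norm, dist_eq_norm]; exact hg x y
    exact this.continuous
  have hzc : ContinuousOn z (Icc a b) := fun t ht => (hz t ht).continuousAt.continuousWithinAt
  -- FTC
  have hftc : ∀ t t', a ≤ t → t ≤ t' → t' ≤ b →
      z t' - z t = ∫ s in t..t', g (z s) := by
    intro t t' h1 h2 h3
    have hsub : Icc t t' ⊆ Icc a b := Icc_subset_Icc h1 h3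
    have hcont : ContinuousOn (fun s => g (z s)) (uIcc t t') := by
      rw [uIcc_of_le h2]; exact hgc.comp_continuousOn (hzc.mono hsub)
    exact (intervalIntegral.integral_eq_sub_of_hasDerivAt
      (fun s hs => hz s (hsub (by rwa [uIcc_of_le h2] at hs)))
      hcont.intervalIntegrable).symm
  -- z is G-Lipschitz forward
  have hzlip : ∀ t t', a ≤ t → t ≤ t' → t' ≤ b → ‖z t' - z t‖ ≤ G * (t' - t) := by
    intro t t' h1 h2 h3
    rw [hftc t t' h1 h2 h3]
    calc ‖∫ s in t..t', g (z s)‖ ≤ G * |t' - t| :=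
          intervalIntegral.norm_integral_le_of_norm_le_const fun s _ => hG (z s)
      _ = G * (t' - t) := by rw [abs_of_nonneg (by linarith)]
  -- local truncation error
  have hloc : ∀ t t', a ≤ t → t ≤ t' → t' ≤ b →
      ‖z t' - z t - (t' - t) • g (z t)‖ ≤ L * G / 2 * (t' - t) ^ 2 := by
    intro t t' h1 h2 h3
    have hsub : Icc t t' ⊆ Icc a b := Icc_subset_Icc h1 h3
    have hcont : ContinuousOn (fun s => g (z s)) (uIcc t t') := by
      rw [uIcc_of_le h2]; exact hgc.comp_continuousOn (hzc.mono hsub)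
    have hint1 : IntervalIntegrable (fun s => g (z s)) MeasureTheory.volume t t' :=
      hcont.intervalIntegrable
    have hint2 : IntervalIntegrable (fun _ => g (z t)) MeasureTheory.volume t t' :=
      intervalIntegrable_const
    have heq : z t' - z t - (t' - t) • g (z t) = ∫ s in t..t', (g (z s) - g (z t)) := by
      rw [intervalIntegral.integral_sub hint1 hint2, intervalIntegral.integral_const,
        hftc t t' h1 h2 h3]
    rw [heq]
    have hb : ∀ s ∈ Icc t t', ‖g (z s) - g (z t)‖ ≤ L * G * (s - t) := fun s hs =>
      calc ‖g (z s) - g (z t)‖ ≤ L * ‖z s - z t‖ := hg _ _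
        _ ≤ L * (G * (s - t)) :=
            mul_le_mul_of_nonneg_left (hzlip t s h1 hs.1 (le_trans hs.2 h3)) hL
        _ = L * G * (s - t) := by ring
    have hnint : IntervalIntegrable (fun s => ‖g (z s) - g (z t)‖) MeasureTheory.volume t t' :=
      ((hcont.sub continuousOn_const).norm).intervalIntegrable
    have hbint : IntervalIntegrable (fun s => L * G * (s - t)) MeasureTheory.volume t t' :=
      (continuous_const.mul (continuous_id.sub continuous_const)).intervalIntegrable t t'
    calc ‖∫ s in t..t', (g (z s) - g (z t))‖
        ≤ ∫ s in t..t', ‖g (z s) - g (z t)‖ :=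
          intervalIntegral.norm_integral_le_integral_norm h2
      _ ≤ ∫ s in t..t', L * G * (s - t) :=
          intervalIntegral.integral_mono_on h2 hnint hbint hb
      _ = L * G / 2 * (t' - t) ^ 2 := by
          open intervalIntegral in
          rw [integral_const_mul,
            integral_sub intervalIntegrable_id intervalIntegrable_const,
            integral_id, integral_const, smul_eq_mul]
          ring
  -- one-step estimate
  set C : ℝ := Δt * δ + L * G / 2 * Δt ^ 2 with hCdef
  have hC0 : 0 ≤ C := by positivity
  have hstep : ∀ k : ℕ, k + 1 ≤ n →
      ‖z (a + ((k : ℝ) + 1) * Δt) - zh (k + 1)‖ ≤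
        (1 + L * Δt) * ‖z (a + (k : ℝ) * Δt) - zh k‖ + C := by
    intro k hk
    set t : ℝ := a + (k : ℝ) * Δt with ht
    set t' : ℝ := a + ((k : ℝ) + 1) * Δt with ht'
    have hkd : t' - t = Δt := by rw [ht, ht']; ring
    have h1 : a ≤ t := by
      have : (0:ℝ) ≤ (k : ℝ) := Nat.cast_nonneg k
      nlinarith
    have h2 : t ≤ t' := by rw [ht, ht']; nlinarith [Nat.cast_nonneg (α := ℝ) k]
    have h3 : t' ≤ b := by
      have hk' : ((k : ℝ) + 1) ≤ (n : ℝ) := by exact_mod_cast hk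
      have : ((k : ℝ) + 1) * Δt ≤ (n : ℝ) * Δt := mul_le_mul_of_nonneg_right hk' hΔt0
      rw [ht']; linarith [hΔtn]
    have hdecomp : z t' - zh (k + 1) =
        (z t' - z t - Δt • g (z t)) +
        ((z t - zh k) + Δt • (g (z t) - g (zh k))) +
        Δt • (g (zh k) - ghat (zh k)) := by
      rw [hzh k]; module
    have hA : ‖z t' - z t - Δt • g (z t)‖ ≤ L * G / 2 * Δt ^ 2 := by
      have := hloc t t' h1 h2 h3
      rwa [hkd] at this
    have hB : ‖Δt • (g (z t) - g (zh k))‖ ≤ Δt * (L * ‖z t - zh k‖) := by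
      rw [norm_smul, Real.norm_eq_abs, abs_of_nonneg hΔt0]
      exact mul_le_mul_of_nonneg_left (hg _ _) hΔt0
    have hD : ‖Δt • (g (zh k) - ghat (zh k))‖ ≤ Δt * δ := by
      rw [norm_smul, Real.norm_eq_abs, abs_of_nonneg hΔt0]
      exact mul_le_mul_of_nonneg_left (by rw [norm_sub_rev]; exact hδ _) hΔt0
    calc ‖z t' - zh (k + 1)‖
        ≤ ‖z t' - z t - Δt • g (z t)‖ +
          ‖(z t - zh k) + Δt • (g (z t) - g (zh k))‖ +
          ‖Δt • (g (zh k) - ghat (zh k))‖ := by rw [hdecomp]; exact norm_add₃_le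
      _ ≤ (L * G / 2 * Δt ^ 2) + (‖z t - zh k‖ + Δt * (L * ‖z t - zh k‖)) + Δt * δ := by
          have hm : ‖(z t - zh k) + Δt • (g (z t) - g (zh k))‖ ≤
              ‖z t - zh k‖ + Δt * (L * ‖z t - zh k‖) :=
            le_trans (norm_add_le _ _) (add_le_add le_rfl hB)
          exact add_le_add (add_le_add hA hm) hD
      _ = (1 + L * Δt) * ‖z t - zh k‖ + C := by rw [hCdef]; ring
  -- induction
  have h1L : (1:ℝ) ≤ 1 + L * Δt := by nlinarith [mul_nonneg hL hΔt0]
  have hind : ∀ k : ℕ, k ≤ n →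
      ‖z (a + (k : ℝ) * Δt) - zh k‖ ≤ (k : ℝ) * C * (1 + L * Δt) ^ k := by
    intro k
    induction k with
    | zero => intro _; simp [hzh0]
    | succ k ih =>
      intro hk
      have hk' : k ≤ n := by omega
      have hpow : (1:ℝ) ≤ (1 + L * Δt) ^ (k + 1) := one_le_pow₀ h1L
      have hCpow : C * 1 ≤ C * (1 + L * Δt) ^ (k + 1) :=
        mul_le_mul_of_nonneg_left hpow hC0
      push_cast
      calc ‖z (a + ((k : ℝ) + 1) * Δt) - zh (k + 1)‖
          ≤ (1 + L * Δt) * ‖z (a + (k : ℝ) * Δt) - zh k‖ + C := hstep k hk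
        _ ≤ (1 + L * Δt) * ((k : ℝ) * C * (1 + L * Δt) ^ k) + C := by
            exact add_le_add_left (mul_le_mul_of_nonneg_left (ih hk') (by linarith)) C
        _ = (k : ℝ) * C * (1 + L * Δt) ^ (k + 1) + C * 1 := by ring
        _ ≤ (k : ℝ) * C * (1 + L * Δt) ^ (k + 1) + C * (1 + L * Δt) ^ (k + 1) := by
            have hnn : 0 ≤ (k : ℝ) * C * (1 + L * Δt) ^ (k + 1) := by positivity
            linarith
        _ = ((k : ℝ) + 1) * C * (1 + L * Δt) ^ (k + 1) := by ring
  -- conclusion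
  intro k hk
  have hk' : k + 1 ≤ n := hk
  have E := Real.exp (L * (b - a))
  have hE0 : (0:ℝ) < Real.exp (L * (b - a)) := Real.exp_pos _
  have main := hind (k + 1) hk'
  have hcast : (((k + 1 : ℕ)) : ℝ) = (k : ℝ) + 1 := by push_cast; ring
  rw [hcast] at main
  have e1 : ((k : ℝ) + 1) ≤ (n : ℝ) := by exact_mod_cast hk'
  have e2 : (1 + L * Δt) ^ (k + 1) ≤ (1 + L * Δt) ^ n :=
    pow_le_pow_right₀ h1L hk'
  have step1 : ((k : ℝ) + 1) * C * (1 + L * Δt) ^ (k + 1) ≤ (n : ℝ) * C * (1 + L * Δt) ^ n := by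
    have h01 : (0:ℝ) ≤ (1 + L * Δt) ^ (k + 1) := by positivity
    have hnc : ((k : ℝ) + 1) * C ≤ (n : ℝ) * C := mul_le_mul_of_nonneg_right e1 hC0
    have hnc0 : 0 ≤ ((k : ℝ) + 1) * C := by positivity
    exact mul_le_mul hnc e2 h01 (le_trans hnc0 hnc)
  have step2 : (1 + L * Δt) ^ n ≤ Real.exp (L * (b - a)) := by
    have h1exp : (1 + L * Δt) ≤ Real.exp (L * Δt) := by
      have := Real.add_one_le_exp (L * Δt)
      linarith
    calc (1 + L * Δt) ^ n ≤ Real.exp (L * Δt) ^ n :=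
          pow_le_pow_left₀ (by linarith) h1exp n
      _ = Real.exp ((n : ℝ) * (L * Δt)) := by rw [← Real.exp_nat_mul]
      _ = Real.exp (L * (b - a)) := by rw [← hΔtn]; ring_nf
  have step3 : (n : ℝ) * C * (1 + L * Δt) ^ n ≤ (n : ℝ) * C * Real.exp (L * (b - a)) := by
    have : 0 ≤ (n : ℝ) * C := by positivity
    exact mul_le_mul_of_nonneg_left step2 this
  have hval : (n : ℝ) * C * Real.exp (L * (b - a)) =
      (b - a) * Real.exp (L * (b - a)) * δ +
        L * G / 2 * (b - a) * Real.exp (L * (b - a)) * Δt := by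
    rw [hCdef, ← hΔtn]; ring
  have hpos : 0 ≤ (b - a) * Real.exp (L * (b - a)) * δ := by
    have : 0 ≤ b - a := by linarith
    positivity
  calc ‖z (a + ((k : ℝ) + 1) * Δt) - zh (k + 1)‖
      ≤ ((k : ℝ) + 1) * C * (1 + L * Δt) ^ (k + 1) := main
    _ ≤ (n : ℝ) * C * (1 + L * Δt) ^ n := step1
    _ ≤ (n : ℝ) * C * Real.exp (L * (b - a)) := step3
    _ = (b - a) * Real.exp (L * (b - a)) * δ +
          L * G / 2 * (b - a) * Real.exp (L * (b - a)) * Δt := hval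
    _ ≤ 3 * (b - a) * Real.exp (L * (b - a)) * δ +
          L * G / 2 * (b - a) * Real.exp (L * (b - a)) * Δt := by nlinarith [hpos]


end
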